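/- For n > 1, let T be the double star obtained by taking a single edge {u,w} and appending n pendant leaves to u and n pendant leaves to w. Then T has no optimal distinguishing coloring in which the two center vertices receive the same color, and D(L(T)) = D(T) + 1. -/

import Mathlib

open SimpleGraph

universe u

/-- A coloring `f : V(G) → {1,…,k}` distinguishes `G` if the only automorphism of `G`
preserving the coloring is the identity. -/
def Distinguishes {V : Type u} (G : SimpleGraph V) {k : ℕ} (f : V → Fin k) : Prop :=
  ∀ φ : G ≃g G, (∀ v, f (φ v) = f v) → ∀ v, φ v = v

/-- The distinguishing number `D(G)`: the least `k` such that some `k`-coloring of the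
vertices distinguishes `G`. -/
noncomputable def distinguishingNumber {V : Type u} (G : SimpleGraph V) : ℕ :=
  sInf {k : ℕ | ∃ f : V → Fin k, Distinguishes G f}

/-- The double star: a single central edge `{u, w}` (with `u = inl 0`, `w = inl 1`) together
with `n` pendant leaves `inr (0, j)` attached to `u` and `n` pendant leaves `inr (1, j)`
attached to `w`. -/
def doubleStar (n : ℕ) : SimpleGraph (Fin 2 ⊕ Fin 2 × Fin n) :=
  SimpleGraph.fromRel (fun a b =>
    (a = Sum.inl 0 ∧ b = Sum.inl 1) ∨ ∃ i j, a = Sum.inl i ∧ b = Sum.inr (i, j))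

variable {n : ℕ}

@[simp] lemma adj_inl_inl {i j : Fin 2} : (doubleStar n).Adj (Sum.inl i) (Sum.inl j) ↔ i ≠ j := by
  simp [doubleStar]
  intro h; fin_cases i <;> fin_cases j <;> simp_all

@[simp] lemma adj_inl_inr {i i' : Fin 2} {j : Fin n} :
    (doubleStar n).Adj (Sum.inl i) (Sum.inr (i', j)) ↔ i = i' := by
  simp [doubleStar]; fin_cases i <;> fin_cases i' <;> simp

@[simp] lemma adj_inr_inl {i i' : Fin 2} {j : Fin n} :
    (doubleStar n).Adj (Sum.inr (i', j)) (Sum.inl i) ↔ i = i' := by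
  rw [SimpleGraph.adj_comm]; exact adj_inl_inr

@[simp] lemma adj_inr_inr {x y : Fin 2 × Fin n} :
    ¬ (doubleStar n).Adj (Sum.inr x) (Sum.inr y) := by
  simp [doubleStar]


lemma swap_adj_iff {W : Type u} [DecidableEq W] (G : SimpleGraph W) {x y : W}
    (h : ∀ z, z ≠ x → z ≠ y → (G.Adj x z ↔ G.Adj y z)) (a b : W) :
    G.Adj (Equiv.swap x y a) (Equiv.swap x y b) ↔ G.Adj a b := by
  have h' : ∀ z, z ≠ x → z ≠ y → (G.Adj z x ↔ G.Adj z y) := fun z h1 h2 => by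
    rw [G.adj_comm z x, G.adj_comm z y]; exact h z h1 h2
  rcases eq_or_ne a x with rfl | hax
  · rw [Equiv.swap_apply_left]
    rcases eq_or_ne b a with rfl | hba
    · rw [Equiv.swap_apply_left]; simp
    · rcases eq_or_ne b y with rfl | hby
      · rw [Equiv.swap_apply_right]; exact G.adj_comm _ _
      · rw [Equiv.swap_apply_of_ne_of_ne hba hby]; exact (h b hba hby).symm
  · rcases eq_or_ne a y with rfl | hay
    · rw [Equiv.swap_apply_right]
      rcases eq_or_ne b x with rfl | hbx
      · rw [Equiv.swap_apply_left]; exact G.adj_comm _ _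
      · rcases eq_or_ne b a with rfl | hba
        · rw [Equiv.swap_apply_right]; simp
        · rw [Equiv.swap_apply_of_ne_of_ne hbx hba]; exact h b hbx hba
    · rw [Equiv.swap_apply_of_ne_of_ne hax hay]
      rcases eq_or_ne b x with rfl | hbx
      · rw [Equiv.swap_apply_left]; exact (h' a hax hay).symm
      · rcases eq_or_ne b y with rfl | hby
        · rw [Equiv.swap_apply_right]; exact h' a hax hay
        · rw [Equiv.swap_apply_of_ne_of_ne hbx hby]

def swapIso {W : Type u} [DecidableEq W] (G : SimpleGraph W) (x y : W)
    (h : ∀ z, z ≠ x → z ≠ y → (G.Adj x z ↔ G.Adj y z)) : G ≃g G :=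
  ⟨Equiv.swap x y, fun {a b} => swap_adj_iff G h a b⟩

def sideSwap (n : ℕ) (g : Fin n ≃ Fin n) : doubleStar n ≃g doubleStar n where
  toEquiv := Equiv.sumCongr (Equiv.swap 0 1)
    (Equiv.prodShear (Equiv.swap 0 1) (fun i => if i = 0 then g else g.symm))
  map_rel_iff' := by
    rintro (i | ⟨i, j⟩) (i' | ⟨i', j'⟩) <;>
      simp [Equiv.prodShear, (Equiv.swap (0:Fin 2) 1).injective.ne_iff,
        (Equiv.swap (0:Fin 2) 1).injective.eq_iff]

lemma swap_pres {W : Type u} [DecidableEq W] {k : ℕ} (f : W → Fin k) {x y : W}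
    (h : f x = f y) (v : W) : f (Equiv.swap x y v) = f v := by
  rcases eq_or_ne v x with rfl | h1
  · rw [Equiv.swap_apply_left]; exact h.symm
  rcases eq_or_ne v y with rfl | h2
  · rw [Equiv.swap_apply_right]; exact h
  · rw [Equiv.swap_apply_of_ne_of_ne h1 h2]


/-- twin leaves -/
lemma leaf_twin (i : Fin 2) (j1 j2 : Fin n) :
    ∀ z, z ≠ Sum.inr (i, j1) → z ≠ Sum.inr (i, j2) →
      ((doubleStar n).Adj (Sum.inr (i, j1)) z ↔ (doubleStar n).Adj (Sum.inr (i, j2)) z) := by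
  rintro (k | x) _ _ <;> simp

/-- images of leaf colorings are injective for a distinguishing coloring -/
lemma leaf_colors_inj {k : ℕ} {f : (Fin 2 ⊕ Fin 2 × Fin n) → Fin k}
    (hf : Distinguishes (doubleStar n) f) (i : Fin 2) :
    Function.Injective (fun j : Fin n => f (Sum.inr (i, j))) := by
  intro j1 j2 hj
  by_contra hne
  set x : Fin 2 ⊕ Fin 2 × Fin n := Sum.inr (i, j1) with hx
  set y : Fin 2 ⊕ Fin 2 × Fin n := Sum.inr (i, j2) with hy
  have hxy : x ≠ y := by simp [hx, hy, hne]
  have := hf (swapIso (doubleStar n) x y (leaf_twin i j1 j2))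
    (swap_pres f hj) x
  simp only [swapIso, RelIso.coe_fn_mk, Equiv.swap_apply_left] at this
  exact hxy this.symm

lemma dT_lb {k : ℕ} (f : (Fin 2 ⊕ Fin 2 × Fin n) → Fin k)
    (hf : Distinguishes (doubleStar n) f) : n ≤ k := by
  by_contra h
  push_neg at h
  obtain ⟨j1, j2, hne, hj⟩ := Fintype.exists_ne_map_eq_of_card_lt
    (fun j : Fin n => f (Sum.inr (0, j))) (by simpa using h)
  exact hne (leaf_colors_inj hf 0 hj)

lemma leaf_nbr {i : Fin 2} {j : Fin n} {z : Fin 2 ⊕ Fin 2 × Fin n}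
    (h : (doubleStar n).Adj (Sum.inr (i, j)) z) : z = Sum.inl i := by
  rcases z with k | x
  · rw [adj_inr_inl] at h; rw [h]
  · exact absurd h adj_inr_inr

lemma exists_inl (hn : 0 < n) (φ : doubleStar n ≃g doubleStar n) (i : Fin 2) :
    ∃ i', φ (Sum.inl i) = Sum.inl i' := by
  rcases hφ : φ (Sum.inl i) with k | ⟨i', j'⟩
  · exact ⟨k, rfl⟩
  · exfalso
    have hne : i ≠ i + 1 := by fin_cases i <;> decide
    have h1 : (doubleStar n).Adj (Sum.inl i) (Sum.inl (i + 1)) := adj_inl_inl.mpr hne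
    have h1' := φ.map_rel_iff.mpr h1
    have h2' := φ.map_rel_iff.mpr (show (doubleStar n).Adj (Sum.inl i) (Sum.inr (i, ⟨0, hn⟩)) by
      simp)
    rw [hφ] at h1' h2'
    have e1 := leaf_nbr h1'
    have e2 := leaf_nbr h2'
    exact absurd (φ.injective (e1.trans e2.symm)) (by simp)

lemma dT_ub (hn : 2 ≤ n) :
    ∃ f : (Fin 2 ⊕ Fin 2 × Fin n) → Fin n, Distinguishes (doubleStar n) f := by
  refine ⟨Sum.elim (fun i => Fin.castLE hn i) Prod.snd, ?_⟩
  intro φ hcol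
  have hn0 : 0 < n := by omega
  have hinl : ∀ i : Fin 2, φ (Sum.inl i) = Sum.inl i := by
    intro i
    obtain ⟨i', hi'⟩ := exists_inl hn0 φ i
    have := hcol (Sum.inl i)
    rw [hi'] at this
    simp only [Sum.elim_inl] at this
    have : i' = i := by
      have := congrArg Fin.val this
      simpa [Fin.ext_iff] using this
    rw [hi', this]
  intro v
  rcases v with i | ⟨i, j⟩
  · exact hinl i
  · have hadj : (doubleStar n).Adj (Sum.inr (i, j)) (Sum.inl i) := by simp
    have h' := φ.map_rel_iff.mpr hadj
    rw [hinl i] at h'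
    rcases hφ : φ (Sum.inr (i, j)) with k | ⟨i', j'⟩
    · exfalso
      have := φ.injective (hφ.trans (hinl k).symm)
      simp at this
    · rw [hφ] at h'
      rw [adj_inr_inl] at h'
      have hc := hcol (Sum.inr (i, j))
      rw [hφ] at hc
      simp only [Sum.elim_inr] at hc
      rw [h', hc]


lemma dT_eq (hn : 1 < n) : distinguishingNumber (doubleStar n) = n := by
  refine le_antisymm (Nat.sInf_le (dT_ub hn)) (le_csInf ⟨n, dT_ub hn⟩ ?_)
  rintro k ⟨f, hf⟩
  exact dT_lb f hf

/-- apply lemmas for sideSwap -/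
@[simp] lemma sideSwap_inl (g : Fin n ≃ Fin n) (i : Fin 2) :
    sideSwap n g (Sum.inl i) = Sum.inl (Equiv.swap 0 1 i) := rfl

@[simp] lemma sideSwap_inr0 (g : Fin n ≃ Fin n) (j : Fin n) :
    sideSwap n g (Sum.inr (0, j)) = Sum.inr (1, g j) := by
  show Sum.inr _ = _
  simp [Equiv.prodShear]

@[simp] lemma sideSwap_inr1 (g : Fin n ≃ Fin n) (j : Fin n) :
    sideSwap n g (Sum.inr (1, j)) = Sum.inr (0, g.symm j) := by
  show Sum.inr _ = _
  simp [Equiv.prodShear]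

lemma part1 (hn : 1 < n)
    {f : (Fin 2 ⊕ Fin 2 × Fin n) → Fin n}
    (hdist : Distinguishes (doubleStar n) f) (heq : f (Sum.inl 0) = f (Sum.inl 1)) :
    False := by
  have h0 := leaf_colors_inj hdist 0
  have h1 := leaf_colors_inj hdist 1
  have b0 : Function.Bijective (fun j : Fin n => f (Sum.inr (0, j))) :=
    (Finite.injective_iff_bijective).mp h0
  have b1 : Function.Bijective (fun j : Fin n => f (Sum.inr (1, j))) :=
    (Finite.injective_iff_bijective).mp h1
  set g0e := Equiv.ofBijective _ b0
  set g1e := Equiv.ofBijective _ b1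
  set g : Fin n ≃ Fin n := g0e.trans g1e.symm with hg
  have hgspec : ∀ j, f (Sum.inr (1, g j)) = f (Sum.inr (0, j)) := by
    intro j
    have : g1e (g j) = g0e j := by simp [hg]
    simpa [g0e, g1e, Equiv.ofBijective] using this
  have hcol : ∀ v, f (sideSwap n g v) = f v := by
    rintro (i | ⟨i, j⟩)
    · fin_cases i
      · exact heq.symm
      · exact heq
    · fin_cases i
      · simpa using hgspec _
      · simp only [sideSwap_inr1]
        have := hgspec (g.symm j)
        rw [Equiv.apply_symm_apply] at this
        exact this.symm
  have := hdist (sideSwap n g) hcol (Sum.inl 0)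
  simp at this

/-! ### Line graph -/

def E0 : (doubleStar n).edgeSet := ⟨s(Sum.inl 0, Sum.inl 1), by simp⟩
def eA (j : Fin n) : (doubleStar n).edgeSet := ⟨s(Sum.inl 0, Sum.inr (0, j)), by simp⟩
def eB (j : Fin n) : (doubleStar n).edgeSet := ⟨s(Sum.inl 1, Sum.inr (1, j)), by simp⟩

@[simp] lemma eA_ne_E0 (j : Fin n) : eA j ≠ E0 := by
  simp [eA, E0, Subtype.ext_iff, Sym2.eq_iff]
@[simp] lemma eB_ne_E0 (j : Fin n) : eB j ≠ E0 := by
  simp [eB, E0, Subtype.ext_iff, Sym2.eq_iff]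
@[simp] lemma eA_ne_eB (j j' : Fin n) : eA j ≠ eB j' := by
  simp [eA, eB, Subtype.ext_iff, Sym2.eq_iff]
@[simp] lemma eA_inj {j j' : Fin n} : eA j = eA j' ↔ j = j' := by
  simp [eA, Subtype.ext_iff, Sym2.eq_iff]
@[simp] lemma eB_inj {j j' : Fin n} : eB j = eB j' ↔ j = j' := by
  simp [eB, Subtype.ext_iff, Sym2.eq_iff]

lemma edge_cases (e : (doubleStar n).edgeSet) :
    e = E0 ∨ (∃ j, e = eA j) ∨ ∃ j, e = eB j := by
  obtain ⟨e, he⟩ := e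
  induction e with
  | _ a b =>
    rw [SimpleGraph.mem_edgeSet] at he
    rcases a with i | ⟨i, j⟩ <;> rcases b with i' | ⟨i', j'⟩
    · rw [adj_inl_inl] at he
      left
      fin_cases i <;> fin_cases i' <;> simp_all [E0, Subtype.ext_iff, Sym2.eq_iff]
    · rw [adj_inl_inr] at he
      right
      subst he
      fin_cases i
      · exact Or.inl ⟨j', by simp [eA, Subtype.ext_iff]⟩
      · exact Or.inr ⟨j', by simp [eB, Subtype.ext_iff]⟩
    · rw [adj_inr_inl] at he
      subst he
      right
      fin_cases i'
      · exact Or.inl ⟨j, by simp [eA, Subtype.ext_iff, Sym2.eq_iff]⟩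
      · exact Or.inr ⟨j, by simp [eB, Subtype.ext_iff, Sym2.eq_iff]⟩
    · exact absurd he adj_inr_inr

@[simp] lemma adj_E0_eA (j : Fin n) : (doubleStar n).lineGraph.Adj E0 (eA j) := by
  rw [lineGraph_adj_iff_exists]
  exact ⟨(eA_ne_E0 j).symm, Sum.inl 0, by simp [E0, eA]⟩

@[simp] lemma adj_E0_eB (j : Fin n) : (doubleStar n).lineGraph.Adj E0 (eB j) := by
  rw [lineGraph_adj_iff_exists]
  exact ⟨(eB_ne_E0 j).symm, Sum.inl 1, by simp [E0, eB]⟩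

@[simp] lemma adj_eA_eA {j j' : Fin n} :
    (doubleStar n).lineGraph.Adj (eA j) (eA j') ↔ j ≠ j' := by
  rw [lineGraph_adj_iff_exists]
  constructor
  · rintro ⟨hne, -⟩ rfl; exact hne rfl
  · intro h; exact ⟨by simp [h], Sum.inl 0, by simp [eA]⟩

@[simp] lemma adj_eB_eB {j j' : Fin n} :
    (doubleStar n).lineGraph.Adj (eB j) (eB j') ↔ j ≠ j' := by
  rw [lineGraph_adj_iff_exists]
  constructor
  · rintro ⟨hne, -⟩ rfl; exact hne rfl
  · intro h; exact ⟨by simp [h], Sum.inl 1, by simp [eB]⟩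

@[simp] lemma not_adj_eA_eB (j j' : Fin n) :
    ¬ (doubleStar n).lineGraph.Adj (eA j) (eB j') := by
  rw [lineGraph_adj_iff_exists]
  rintro ⟨-, v, hv1, hv2⟩
  simp only [eA, eB, Sym2.mem_iff] at hv1 hv2
  rcases hv1 with rfl | rfl <;> rcases hv2 with h | h <;> simp_all

def lineIso {W : Type u} {G : SimpleGraph W} (σ : G ≃g G) : G.lineGraph ≃g G.lineGraph where
  toEquiv := σ.mapEdgeSet
  map_rel_iff' := by
    intro e f
    rw [lineGraph_adj_iff_exists, lineGraph_adj_iff_exists]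
    have hval : ∀ e : G.edgeSet, ((σ.mapEdgeSet e : G.edgeSet) : Sym2 W) = Sym2.map σ e := by
      intro e; rfl
    constructor
    · rintro ⟨hne, v, hv1, hv2⟩
      refine ⟨fun h => hne (by rw [h]), ?_⟩
      rw [hval, Sym2.mem_map] at hv1 hv2
      obtain ⟨u1, hu1, hσ1⟩ := hv1
      obtain ⟨u2, hu2, hσ2⟩ := hv2
      have : u1 = u2 := σ.injective (hσ1.trans hσ2.symm)
      exact ⟨u1, hu1, this ▸ hu2⟩
    · rintro ⟨hne, v, hv1, hv2⟩
      refine ⟨fun h => hne (σ.mapEdgeSet.injective h), σ v, ?_, ?_⟩ <;>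
        rw [hval, Sym2.mem_map]
      · exact ⟨v, hv1, rfl⟩
      · exact ⟨v, hv2, rfl⟩

@[simp] lemma lineIso_apply_val {W : Type u} {G : SimpleGraph W} (σ : G ≃g G) (e : G.edgeSet) :
    ((lineIso σ e : G.edgeSet) : Sym2 W) = Sym2.map σ (e : Sym2 W) := rfl

lemma lineIso_E0 (g : Fin n ≃ Fin n) : lineIso (sideSwap n g) E0 = E0 := by
  apply Subtype.ext
  rw [lineIso_apply_val]
  show Sym2.map _ s(Sum.inl 0, Sum.inl 1) = (s(Sum.inl 0, Sum.inl 1) : Sym2 (Fin 2 ⊕ Fin 2 × Fin n))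
  rw [Sym2.map_pair_eq, sideSwap_inl, sideSwap_inl, Equiv.swap_apply_left,
    Equiv.swap_apply_right, Sym2.eq_swap]

lemma lineIso_eA (g : Fin n ≃ Fin n) (j : Fin n) : lineIso (sideSwap n g) (eA j) = eB (g j) := by
  apply Subtype.ext
  rw [lineIso_apply_val]
  show Sym2.map _ s(Sum.inl 0, Sum.inr (0, j)) = (s(Sum.inl 1, Sum.inr (1, g j)) : Sym2 (Fin 2 ⊕ Fin 2 × Fin n))
  rw [Sym2.map_pair_eq, sideSwap_inl, sideSwap_inr0, Equiv.swap_apply_left]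

lemma lineIso_eB (g : Fin n ≃ Fin n) (j : Fin n) : lineIso (sideSwap n g) (eB j) = eA (g.symm j) := by
  apply Subtype.ext
  rw [lineIso_apply_val]
  show Sym2.map _ s(Sum.inl 1, Sum.inr (1, j)) = (s(Sum.inl 0, Sum.inr (0, g.symm j)) : Sym2 (Fin 2 ⊕ Fin 2 × Fin n))
  rw [Sym2.map_pair_eq, sideSwap_inl, sideSwap_inr1, Equiv.swap_apply_right]

lemma eA_twin (j1 j2 : Fin n) :
    ∀ z, z ≠ eA j1 → z ≠ eA j2 →
      ((doubleStar n).lineGraph.Adj (eA j1) z ↔ (doubleStar n).lineGraph.Adj (eA j2) z) := by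
  intro z h1 h2
  rcases edge_cases z with rfl | ⟨j, rfl⟩ | ⟨j, rfl⟩
  · exact iff_of_true (adj_E0_eA j1).symm (adj_E0_eA j2).symm
  · rw [eA_inj.ne] at h1 h2
    exact iff_of_true (adj_eA_eA.mpr (Ne.symm h1)) (adj_eA_eA.mpr (Ne.symm h2))
  · exact iff_of_false (not_adj_eA_eB j1 j) (not_adj_eA_eB j2 j)

lemma eB_twin (j1 j2 : Fin n) :
    ∀ z, z ≠ eB j1 → z ≠ eB j2 →
      ((doubleStar n).lineGraph.Adj (eB j1) z ↔ (doubleStar n).lineGraph.Adj (eB j2) z) := by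
  intro z h1 h2
  rcases edge_cases z with rfl | ⟨j, rfl⟩ | ⟨j, rfl⟩
  · exact iff_of_true (adj_E0_eB j1).symm (adj_E0_eB j2).symm
  · exact iff_of_false (fun h => not_adj_eA_eB j j1 h.symm) (fun h => not_adj_eA_eB j j2 h.symm)
  · rw [eB_inj.ne] at h1 h2
    exact iff_of_true (adj_eB_eB.mpr (Ne.symm h1)) (adj_eB_eB.mpr (Ne.symm h2))

lemma edge_colors_injA {k : ℕ} {f : (doubleStar n).edgeSet → Fin k}
    (hf : Distinguishes (doubleStar n).lineGraph f) :
    Function.Injective (fun j : Fin n => f (eA j)) := by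
  intro j1 j2 hj
  by_contra hne
  have hxy : eA j1 ≠ eA j2 := by simp [hne]
  have := hf (swapIso _ (eA j1) (eA j2) (eA_twin j1 j2)) (swap_pres f hj) (eA j1)
  simp only [swapIso, RelIso.coe_fn_mk, Equiv.swap_apply_left] at this
  exact hxy this.symm

lemma edge_colors_injB {k : ℕ} {f : (doubleStar n).edgeSet → Fin k}
    (hf : Distinguishes (doubleStar n).lineGraph f) :
    Function.Injective (fun j : Fin n => f (eB j)) := by
  intro j1 j2 hj
  by_contra hne
  have hxy : eB j1 ≠ eB j2 := by simp [hne]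
  have := hf (swapIso _ (eB j1) (eB j2) (eB_twin j1 j2)) (swap_pres f hj) (eB j1)
  simp only [swapIso, RelIso.coe_fn_mk, Equiv.swap_apply_left] at this
  exact hxy this.symm

lemma dL_lb (hn : 1 < n) {k : ℕ} (f : (doubleStar n).edgeSet → Fin k)
    (hf : Distinguishes (doubleStar n).lineGraph f) : n + 1 ≤ k := by
  have hA := edge_colors_injA hf
  have hB := edge_colors_injB hf
  have hnk : n ≤ k := by simpa using Fintype.card_le_of_injective _ hA
  rcases eq_or_lt_of_le hnk with rfl | h
  · exfalso
    have bA : Function.Bijective (fun j : Fin n => f (eA j)) :=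
      (Finite.injective_iff_bijective).mp hA
    have bB : Function.Bijective (fun j : Fin n => f (eB j)) :=
      (Finite.injective_iff_bijective).mp hB
    set gAe := Equiv.ofBijective _ bA
    set gBe := Equiv.ofBijective _ bB
    set g : Fin n ≃ Fin n := gAe.trans gBe.symm with hg
    have hgspec : ∀ j, f (eB (g j)) = f (eA j) := by
      intro j
      have : gBe (g j) = gAe j := by simp [hg]
      simpa [gAe, gBe, Equiv.ofBijective] using this
    have hcol : ∀ e, f (lineIso (sideSwap n g) e) = f e := by
      intro e
      rcases edge_cases e with rfl | ⟨j, rfl⟩ | ⟨j, rfl⟩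
      · rw [lineIso_E0]
      · rw [lineIso_eA]; exact hgspec j
      · rw [lineIso_eB]
        have := hgspec (g.symm j)
        rw [Equiv.apply_symm_apply] at this
        exact this.symm
    have z0 : Fin n := ⟨0, by omega⟩
    have := hf (lineIso (sideSwap n g)) hcol (eA ⟨0, by omega⟩)
    rw [lineIso_eA] at this
    exact eA_ne_eB _ _ this.symm
  · omega

noncomputable def fLopt (e : (doubleStar n).edgeSet) : Fin (n + 1) :=
  if h : ∃ j, e = eA j then (h.choose).castSucc
  else if h' : ∃ j, e = eB j then (h'.choose).succ
  else 0

lemma fLopt_eA (j : Fin n) : fLopt (eA j) = j.castSucc := by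
  have h : ∃ j', eA j = eA j' := ⟨j, rfl⟩
  rw [fLopt, dif_pos h]
  congr 1
  exact (eA_inj.mp h.choose_spec).symm

lemma fLopt_eB (j : Fin n) : fLopt (eB j) = j.succ := by
  have h : ¬ ∃ j', eB j = eA (j' : Fin n) := by
    rintro ⟨j', hj⟩; exact eA_ne_eB j' j hj.symm
  have h' : ∃ j', eB j = eB j' := ⟨j, rfl⟩
  rw [fLopt, dif_neg h, dif_pos h']
  congr 1
  exact (eB_inj.mp h'.choose_spec).symm

lemma fLopt_E0 : fLopt (E0 : (doubleStar n).edgeSet) = 0 := by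
  have h : ¬ ∃ j', (E0 : (doubleStar n).edgeSet) = eA j' := by
    rintro ⟨j', hj⟩; exact eA_ne_E0 j' hj.symm
  have h' : ¬ ∃ j', (E0 : (doubleStar n).edgeSet) = eB j' := by
    rintro ⟨j', hj⟩; exact eB_ne_E0 j' hj.symm
  rw [fLopt, dif_neg h, dif_neg h']

lemma dL_ub (hn : 1 < n) :
    ∃ f : (doubleStar n).edgeSet → Fin (n + 1),
      Distinguishes (doubleStar n).lineGraph f := by
  have hn0 : 0 < n := by omega
  set z0 : Fin n := ⟨0, hn0⟩ with hz0
  refine ⟨fLopt, ?_⟩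
  intro ψ hcol
  -- E0 is adjacent to every other edge
  have hall : ∀ e : (doubleStar n).edgeSet, e ≠ E0 → (doubleStar n).lineGraph.Adj E0 e := by
    intro e he
    rcases edge_cases e with rfl | ⟨j, rfl⟩ | ⟨j, rfl⟩
    · exact absurd rfl he
    · exact adj_E0_eA j
    · exact adj_E0_eB j
  have hE0 : ψ E0 = E0 := by
    by_contra hne
    -- ψ E0 is adjacent to every edge except itself
    have hall' : ∀ e : (doubleStar n).edgeSet, e ≠ ψ E0 →
        (doubleStar n).lineGraph.Adj (ψ E0) e := by
      intro e he
      have h1 : ψ.symm e ≠ E0 := by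
        intro h
        exact he (by rw [← h, RelIso.apply_symm_apply])
      have := ψ.map_rel_iff.mpr (hall _ h1)
      rwa [RelIso.apply_symm_apply] at this
    rcases edge_cases (ψ E0) with h | ⟨j, h⟩ | ⟨j, h⟩
    · exact hne h
    · have := hall' (eB z0) (by rw [h]; exact (eA_ne_eB j z0).symm)
      rw [h] at this
      exact not_adj_eA_eB j z0 this
    · have := hall' (eA z0) (by rw [h]; exact (eA_ne_eB z0 j))
      rw [h] at this
      exact (not_adj_eA_eB z0 j) this.symm
  have hψA_ne_E0 : ∀ j, ψ (eA j) ≠ E0 := by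
    intro j h
    exact eA_ne_E0 j (ψ.injective (h.trans hE0.symm))
  have hψB_ne_E0 : ∀ j, ψ (eB j) ≠ E0 := by
    intro j h
    exact eB_ne_E0 j (ψ.injective (h.trans hE0.symm))
  have hA0 : ψ (eA z0) = eA z0 := by
    rcases edge_cases (ψ (eA z0)) with h | ⟨j, h⟩ | ⟨j, h⟩
    · exact absurd h (hψA_ne_E0 z0)
    · have hc := hcol (eA z0)
      rw [h, fLopt_eA, fLopt_eA] at hc
      rw [h]
      congr 1
      exact Fin.castSucc_injective n hc
    · exfalso
      have hc := hcol (eA z0)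
      rw [h, fLopt_eB, fLopt_eA] at hc
      have := congrArg Fin.val hc
      simp [hz0] at this
  have hAj : ∀ j, ψ (eA j) = eA j := by
    intro j
    rcases eq_or_ne j z0 with rfl | hj
    · exact hA0
    · have hadj : (doubleStar n).lineGraph.Adj (eA z0) (eA j) := adj_eA_eA.mpr (Ne.symm hj)
      have h' := ψ.map_rel_iff.mpr hadj
      rw [hA0] at h'
      rcases edge_cases (ψ (eA j)) with h | ⟨j', h⟩ | ⟨j', h⟩
      · exact absurd h (hψA_ne_E0 j)
      · have hc := hcol (eA j)
        rw [h, fLopt_eA, fLopt_eA] at hc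
        rw [h]
        congr 1
        exact Fin.castSucc_injective n hc
      · rw [h] at h'
        exact absurd h' (not_adj_eA_eB z0 j')
  have hBj : ∀ j, ψ (eB j) = eB j := by
    intro j
    rcases edge_cases (ψ (eB j)) with h | ⟨j', h⟩ | ⟨j', h⟩
    · exact absurd h (hψB_ne_E0 j)
    · exfalso
      have := ψ.injective (h.trans (hAj j').symm)
      exact eA_ne_eB j' j this.symm
    · have hc := hcol (eB j)
      rw [h, fLopt_eB, fLopt_eB] at hc
      rw [h]
      congr 1
      exact Fin.succ_injective n hc
  intro e
  rcases edge_cases e with rfl | ⟨j, rfl⟩ | ⟨j, rfl⟩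
  · exact hE0
  · exact hAj j
  · exact hBj j

lemma dL_eq (hn : 1 < n) : distinguishingNumber (doubleStar n).lineGraph = n + 1 := by
  refine le_antisymm (Nat.sInf_le (dL_ub hn)) (le_csInf ⟨n + 1, dL_ub hn⟩ ?_)
  rintro k ⟨f, hf⟩
  exact dL_lb hn f hf

theorem doubleStar_lineGraph_distinguishingNumber (n : ℕ) (hn : 1 < n) :
    (¬ ∃ f : (Fin 2 ⊕ Fin 2 × Fin n) → Fin (distinguishingNumber (doubleStar n)),
        Distinguishes (doubleStar n) f ∧ f (Sum.inl 0) = f (Sum.inl 1)) ∧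
      distinguishingNumber (doubleStar n).lineGraph = distinguishingNumber (doubleStar n) + 1 := by
  constructor
  · rw [dT_eq hn]
    rintro ⟨f, hd, he⟩
    exact part1 hn hd he
  · rw [dL_eq hn, dT_eq hn]
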